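/- Let Γ be a finitely generated free group with free basis S = {u, v, w₁,…,w_n} (n ≥ 0), with word length ‖·‖ relative to S and stable length [g]_∞ = lim ‖gᵏ‖/k. For every g ∈ Γ, at least one of the elements g, gu, gv is cyclically reduced, and hence max([g]_∞, [gu]_∞, [gv]_∞) ≥ ‖g‖ − 1. In particular ‖g‖ ≤ max(ℓ(g), ℓ(gu), ℓ(gv)) + 1, so free groups have the U-property. -/

import Mathlib

open Filter

/-- An element of a free group is cyclically reduced if its reduced word does not
both start with a letter and end with the inverse of that letter. -/
def CyclicallyReduced {α : Type*} [DecidableEq α] (g : FreeGroup α) : Prop :=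
  ∀ x : α × Bool, g.toWord.head? = some x → g.toWord.getLast? ≠ some (x.1, !x.2)

/-- Translation length in the free group: `ℓ(g) = inf_η ‖η g η⁻¹‖` for the word
length `‖·‖ = FreeGroup.norm` relative to the free basis. -/
noncomputable def freeTransLength {α : Type*} [DecidableEq α] (g : FreeGroup α) : ℕ :=
  sInf {n | ∃ η : FreeGroup α, (η * g * η⁻¹).norm = n}

/-- Stable length `[g]_∞ = lim ‖gᵏ‖/k` in the free group. -/
noncomputable def freeStableLength {α : Type*} [DecidableEq α] (g : FreeGroup α) : ℝ :=
  liminf (fun k : ℕ => ((g ^ k).norm : ℝ) / k) atTop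

section Aux

variable {α : Type*} [DecidableEq α]

/-- The no-cancellation relation between consecutive letters. -/
def NoCancel (a b : α × Bool) : Prop := ¬(a.1 = b.1 ∧ a.2 = !b.2)

lemma reduce_eq_self_of_chain' {L : List (α × Bool)} (h : List.Chain' NoCancel L) :
    FreeGroup.reduce L = L := by
  induction L with
  | nil => rfl
  | cons x L ih =>
    rw [FreeGroup.reduce.cons, ih h.tail]
    cases L with
    | nil => rfl
    | cons hd tl =>
      simp only
      rw [if_neg (List.isChain_cons_cons.mp h).1]

lemma chain'_reduce (L : List (α × Bool)) : List.Chain' NoCancel (FreeGroup.reduce L) := by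
  induction L with
  | nil => simp [List.Chain']
  | cons x L ih =>
    rw [FreeGroup.reduce.cons]
    cases h : FreeGroup.reduce L with
    | nil => simp [List.Chain']
    | cons hd tl =>
      rw [h] at ih
      simp only
      by_cases hc : x.1 = hd.1 ∧ x.2 = !hd.2
      · rw [if_pos hc]; exact ih.tail
      · rw [if_neg hc]; exact List.isChain_cons_cons.mpr ⟨hc, ih⟩

lemma chain'_toWord (g : FreeGroup α) : List.Chain' NoCancel g.toWord := by
  rw [← FreeGroup.reduce_toWord]; exact chain'_reduce _

lemma toWord_mk_of_chain' {L : List (α × Bool)} (h : List.Chain' NoCancel L) :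
    (FreeGroup.mk L).toWord = L := by
  rw [FreeGroup.toWord_mk, reduce_eq_self_of_chain' h]

lemma norm_eq_length (g : FreeGroup α) : g.norm = g.toWord.length := rfl

lemma head?_flatten_replicate {L : List (α × Bool)} (k : ℕ) {b : α × Bool}
    (hb : b ∈ (List.flatten (List.replicate k L)).head?) : b ∈ L.head? := by
  induction k with
  | zero => simp at hb
  | succ k ih =>
    rw [List.replicate_succ, List.flatten_cons] at hb
    cases L with
    | nil => simpa using ih (by simpa using hb)
    | cons x t => simpa using hb

lemma chain'_flatten_replicate {L : List (α × Bool)} (h : List.Chain' NoCancel L)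
    (hcyc : ∀ a ∈ L.getLast?, ∀ b ∈ L.head?, NoCancel a b) (k : ℕ) :
    List.Chain' NoCancel (List.flatten (List.replicate k L)) := by
  induction k with
  | zero => simp [List.Chain']
  | succ k ih =>
    rw [List.replicate_succ, List.flatten_cons, List.Chain', List.isChain_append]
    exact ⟨h, ih, fun a ha b hb => hcyc a ha b (head?_flatten_replicate k hb)⟩

lemma cyc_noCancel {g : FreeGroup α} (h : CyclicallyReduced g) :
    ∀ a ∈ g.toWord.getLast?, ∀ b ∈ g.toWord.head?, NoCancel a b := by
  intro a ha b hb hab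
  rw [Option.mem_def] at ha hb
  refine h b hb ?_
  rw [ha]
  congr 1
  exact Prod.ext hab.1 hab.2

lemma norm_pow_of_cyclicallyReduced {g : FreeGroup α} (h : CyclicallyReduced g) (k : ℕ) :
    (g ^ k).norm = k * g.norm := by
  have hg : g = FreeGroup.mk g.toWord := FreeGroup.mk_toWord.symm
  rw [norm_eq_length, norm_eq_length]
  conv_lhs => rw [hg]
  rw [FreeGroup.pow_mk,
    toWord_mk_of_chain' (chain'_flatten_replicate (chain'_toWord g) (cyc_noCancel h) k)]
  simp [List.length_flatten, List.map_replicate, List.sum_replicate, smul_eq_mul]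

lemma freeStableLength_eq {g : FreeGroup α} (h : CyclicallyReduced g) :
    freeStableLength g = g.norm := by
  unfold freeStableLength
  have hev : ∀ᶠ k : ℕ in atTop, ((g ^ k).norm : ℝ) / k = g.norm := by
    filter_upwards [eventually_ne_atTop 0] with k hk
    have hk' : (k : ℝ) ≠ 0 := Nat.cast_ne_zero.mpr hk
    rw [norm_pow_of_cyclicallyReduced h]
    push_cast
    rw [mul_comm, mul_div_assoc, div_self hk', mul_one]
  rw [liminf_congr hev, liminf_const]

lemma normPowLe (g : FreeGroup α) (k : ℕ) : (g ^ k).norm ≤ k * g.norm := by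
  induction k with
  | zero => simp
  | succ k ih =>
    rw [pow_succ]
    calc (g ^ k * g).norm ≤ (g ^ k).norm + g.norm := FreeGroup.norm_mul_le _ _
      _ ≤ k * g.norm + g.norm := by omega
      _ = (k + 1) * g.norm := by ring

lemma norm_le_freeTransLength {g : FreeGroup α} (h : CyclicallyReduced g) :
    g.norm ≤ freeTransLength g := by
  refine le_csInf ⟨g.norm, 1, by simp⟩ ?_
  rintro n ⟨η, rfl⟩
  by_contra hlt
  push_neg at hlt
  set m := (η * g * η⁻¹).norm with hm
  set E := η.norm with hE
  have key : ∀ k : ℕ, k * g.norm ≤ k * m + 2 * E := by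
    intro k
    have h1 : (g ^ k).norm = k * g.norm := norm_pow_of_cyclicallyReduced h k
    have h2 : ((η * g * η⁻¹) ^ k).norm ≤ k * m := normPowLe _ k
    have h3 : g ^ k = η⁻¹ * ((η * g * η⁻¹) ^ k) * η := by rw [conj_pow]; group
    calc k * g.norm = (g ^ k).norm := h1.symm
      _ = (η⁻¹ * ((η * g * η⁻¹) ^ k) * η).norm := by rw [h3]
      _ ≤ η⁻¹.norm + ((η * g * η⁻¹) ^ k).norm + η.norm :=
          le_trans (FreeGroup.norm_mul_le _ _)
            (add_le_add_left (FreeGroup.norm_mul_le _ _) _)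
      _ ≤ E + k * m + E := by
          rw [FreeGroup.norm_inv_eq]; omega
      _ = k * m + 2 * E := by ring
  have hk := key (2 * E + 1)
  nlinarith [hk, hlt]

lemma cyc_mul_of {g : FreeGroup α} {x : α × Bool} {t : α}
    (hhead : g.toWord.head? = some x) (hlast : g.toWord.getLast? = some (x.1, !x.2))
    (ht : t ≠ x.1) :
    CyclicallyReduced (g * FreeGroup.of t) ∧ (g * FreeGroup.of t).norm = g.norm + 1 := by
  have hne : g.toWord ≠ [] := by intro h; rw [h] at hhead; simp at hhead
  have hch : List.Chain' NoCancel (g.toWord ++ [(t, true)]) := by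
    rw [List.Chain', List.isChain_append]
    refine ⟨chain'_toWord g, List.isChain_singleton _, ?_⟩
    intro a ha b hb
    simp only [List.head?_cons, Option.mem_some_iff] at hb
    rw [hlast, Option.mem_some_iff] at ha
    subst ha; subst hb
    intro hab
    exact ht hab.1.symm
  have hgt : (g * FreeGroup.of t) = FreeGroup.mk (g.toWord ++ [(t, true)]) := by
    conv_lhs => rw [← FreeGroup.mk_toWord (x := g), ← FreeGroup.mk_toWord (x := FreeGroup.of t)]
    rw [FreeGroup.mul_mk, FreeGroup.toWord_of]
  have hw : (g * FreeGroup.of t).toWord = g.toWord ++ [(t, true)] := by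
    rw [hgt, toWord_mk_of_chain' hch]
  constructor
  · intro y hy
    rw [hw] at hy ⊢
    rw [List.getLast?_concat]
    have hy' : y = x := by
      cases hL : g.toWord with
      | nil => exact absurd hL hne
      | cons a l =>
        rw [hL] at hy hhead
        simp at hy hhead
        rw [← hy]; exact hhead
    subst hy'
    intro hcon
    rw [Option.some_inj] at hcon
    exact ht (congrArg Prod.fst hcon)
  · rw [norm_eq_length, norm_eq_length, hw, List.length_append, List.length_singleton]

end Aux

/-- In a free group with free basis containing two distinct letters `u` and `v`,
for every `g` at least one of `g`, `gu`, `gv` is cyclically reduced; hence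
`max([g]_∞, [gu]_∞, [gv]_∞) ≥ ‖g‖ − 1` and `‖g‖ ≤ max(ℓ(g), ℓ(gu), ℓ(gv)) + 1`.
In particular free groups have the U-property. -/
theorem free_group_U_property {α : Type*} [DecidableEq α]
    (u v : α) (huv : u ≠ v) (g : FreeGroup α) :
    (CyclicallyReduced g ∨ CyclicallyReduced (g * FreeGroup.of u) ∨
        CyclicallyReduced (g * FreeGroup.of v)) ∧
    max (freeStableLength g)
        (max (freeStableLength (g * FreeGroup.of u))
             (freeStableLength (g * FreeGroup.of v)))
      ≥ (g.norm : ℝ) - 1 ∧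
    (g.norm : ℝ) ≤ max (freeTransLength g : ℝ)
        (max (freeTransLength (g * FreeGroup.of u) : ℝ)
             (freeTransLength (g * FreeGroup.of v) : ℝ)) + 1 := by
  -- find a cyclically reduced element among g, gu, gv with large norm
  have main : ∃ h : FreeGroup α, CyclicallyReduced h ∧ g.norm ≤ h.norm + 1 ∧
      (h = g ∨ h = g * FreeGroup.of u ∨ h = g * FreeGroup.of v) := by
    by_cases hg : CyclicallyReduced g
    · exact ⟨g, hg, by omega, Or.inl rfl⟩
    · unfold CyclicallyReduced at hg
      push_neg at hg
      obtain ⟨x, hhead, hlast⟩ := hg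
      by_cases hxu : x.1 = u
      · have hv : v ≠ x.1 := by rw [hxu]; exact huv.symm
        obtain ⟨hc, hn⟩ := cyc_mul_of hhead hlast hv
        exact ⟨g * FreeGroup.of v, hc, by omega, Or.inr (Or.inr rfl)⟩
      · have hu : u ≠ x.1 := fun h => hxu h.symm
        obtain ⟨hc, hn⟩ := cyc_mul_of hhead hlast hu
        exact ⟨g * FreeGroup.of u, hc, by omega, Or.inr (Or.inl rfl)⟩
  obtain ⟨h, hc, hn, hcases⟩ := main
  have hnR : (g.norm : ℝ) - 1 ≤ (h.norm : ℝ) := by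
    have := (Nat.cast_le (α := ℝ)).mpr hn
    push_cast at this
    linarith
  refine ⟨?_, ?_, ?_⟩
  · rcases hcases with rfl | rfl | rfl
    · exact Or.inl hc
    · exact Or.inr (Or.inl hc)
    · exact Or.inr (Or.inr hc)
  · have hs : freeStableLength h = h.norm := freeStableLength_eq hc
    rcases hcases with rfl | rfl | rfl
    · exact le_trans (by rw [hs]; exact hnR) (le_max_left _ _)
    · exact le_trans (by rw [hs]; exact hnR)
        (le_trans (le_max_left _ _) (le_max_right _ _))
    · exact le_trans (by rw [hs]; exact hnR)
        (le_trans (le_max_right _ _) (le_max_right _ _))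
  · have ht : (h.norm : ℝ) ≤ (freeTransLength h : ℝ) :=
      (Nat.cast_le (α := ℝ)).mpr (norm_le_freeTransLength hc)
    have hgh : (g.norm : ℝ) ≤ (freeTransLength h : ℝ) + 1 := by linarith
    rcases hcases with rfl | rfl | rfl
    · exact le_trans hgh (by gcongr; exact le_max_left _ _)
    · exact le_trans hgh (by
        gcongr
        exact le_trans (le_max_left _ _) (le_max_right _ _))
    · exact le_trans hgh (by
        gcongr
        exact le_trans (le_max_right _ _) (le_max_right _ _))
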